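/- For all natural numbers n and m with 2 ≤ n ≤ m+2, the following identity of rational numbers holds: ∑_{k=0}^{n−1} (−1)^k · (n−k) / (k!·(m+2−k)!) = (−1)^{n−1} · (∏_{j=0}^{n−2} (m−j)) / ((n−1)!·(m+2)!). -/

import Mathlib

open Finset Nat

private lemma lemA (m : ℕ) : ∀ n, n ≤ m + 1 →
    ∑ k ∈ Finset.range (n + 1),
        (-1 : ℚ) ^ k / ((Nat.factorial k : ℚ) * (Nat.factorial (m + 2 - k) : ℚ)) =
      (-1 : ℚ) ^ n * ((m + 1).choose n : ℚ) / (Nat.factorial (m + 2) : ℚ) := by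
  intro n
  induction n with
  | zero => intro _; simp
  | succ n ih =>
    intro hn
    rw [Finset.sum_range_succ, ih (by omega)]
    have hsub : m + 2 - (n + 1) = m + 1 - n := by omega
    rw [hsub]
    have hfac : ((m + 2).factorial : ℚ) =
        ((m + 2).choose (n + 1) : ℚ) * ((n + 1).factorial : ℚ) * ((m + 1 - n).factorial : ℚ) := by
      have := Nat.choose_mul_factorial_mul_factorial (n := m + 2) (k := n + 1) (by omega)
      have h2 : m + 2 - (n + 1) = m + 1 - n := by omega
      rw [h2] at this
      exact_mod_cast this.symm
    have hpascal : ((m + 2).choose (n + 1) : ℚ) =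
        ((m + 1).choose n : ℚ) + ((m + 1).choose (n + 1) : ℚ) := by
      exact_mod_cast congrArg (Nat.cast (R := ℚ)) (Nat.choose_succ_succ (m + 1) n)
    have h1 : ((n + 1).factorial : ℚ) ≠ 0 := by positivity
    have h2 : ((m + 1 - n).factorial : ℚ) ≠ 0 := by positivity
    have h4 : ((m + 2).choose (n + 1) : ℚ) ≠ 0 := by
      exact_mod_cast Nat.cast_ne_zero.mpr (Nat.choose_pos (by omega : n + 1 ≤ m + 2)).ne'
    have key : (-1 : ℚ) ^ (n + 1) / (((n + 1).factorial : ℚ) * ((m + 1 - n).factorial : ℚ)) =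
        (-1 : ℚ) ^ (n + 1) * ((m + 2).choose (n + 1) : ℚ) / ((m + 2).factorial : ℚ) := by
      rw [hfac]
      field_simp
    rw [key]
    have h0 : ((m + 2).factorial : ℚ) ≠ 0 := by positivity
    rw [← add_div, div_eq_div_iff h0 h0]
    rw [hpascal]
    ring

private lemma lemB (m : ℕ) : ∀ n, n ≤ m + 1 →
    ∑ k ∈ Finset.range (n + 1),
        (-1 : ℚ) ^ k * ((n + 1 - k : ℕ) : ℚ) /
          ((Nat.factorial k : ℚ) * (Nat.factorial (m + 2 - k) : ℚ)) =
      (-1 : ℚ) ^ n * (m.choose n : ℚ) / (Nat.factorial (m + 2) : ℚ) := by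
  intro n
  induction n with
  | zero => intro _; simp
  | succ n ih =>
    intro hn
    have split : ∀ k ∈ Finset.range (n + 2),
        (-1 : ℚ) ^ k * ((n + 2 - k : ℕ) : ℚ) /
            ((Nat.factorial k : ℚ) * (Nat.factorial (m + 2 - k) : ℚ)) =
          (-1 : ℚ) ^ k * ((n + 1 - k : ℕ) : ℚ) /
            ((Nat.factorial k : ℚ) * (Nat.factorial (m + 2 - k) : ℚ)) +
          (-1 : ℚ) ^ k / ((Nat.factorial k : ℚ) * (Nat.factorial (m + 2 - k) : ℚ)) := by
      intro k hk
      rw [Finset.mem_range] at hk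
      have : ((n + 2 - k : ℕ) : ℚ) = ((n + 1 - k : ℕ) : ℚ) + 1 := by
        have : (n + 2 - k) = (n + 1 - k) + 1 := by omega
        rw [this]; push_cast; ring
      rw [this]; ring
    rw [Finset.sum_congr rfl split, Finset.sum_add_distrib]
    rw [Finset.sum_range_succ
      (f := fun k => (-1 : ℚ) ^ k * ((n + 1 - k : ℕ) : ℚ) /
        ((Nat.factorial k : ℚ) * (Nat.factorial (m + 2 - k) : ℚ)))]
    simp only [Nat.sub_self, Nat.cast_zero, mul_zero, zero_div, add_zero]
    rw [ih (by omega), lemA m (n + 1) hn]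
    have hpascal : ((m + 1).choose (n + 1) : ℚ) = (m.choose n : ℚ) + (m.choose (n + 1) : ℚ) := by
      exact_mod_cast congrArg (Nat.cast (R := ℚ)) (Nat.choose_succ_succ m n)
    rw [hpascal]
    have h0 : ((m + 2).factorial : ℚ) ≠ 0 := by positivity
    field_simp
    ring

/-- The constant `c_{n,m}` of Proposition 3.2 of the paper (up to the factor `2πi`):
for `2 ≤ n ≤ m + 2`,
`∑_{k=0}^{n−1} (−1)^k (n−k)/(k!(m+2−k)!) = (−1)^{n−1} ∏_{j=0}^{n−2}(m−j) / ((n−1)!(m+2)!)`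
in `ℚ`. -/
theorem sum_alt_weighted_inv_factorial_eq (n m : ℕ) (hn : 2 ≤ n) (hnm : n ≤ m + 2) :
    ∑ k ∈ Finset.range n,
        (-1 : ℚ) ^ k * ((n - k : ℕ) : ℚ) /
          ((Nat.factorial k : ℚ) * (Nat.factorial (m + 2 - k) : ℚ)) =
      (-1 : ℚ) ^ (n - 1) * (∏ j ∈ Finset.range (n - 1), ((m - j : ℕ) : ℚ)) /
        ((Nat.factorial (n - 1) : ℚ) * (Nat.factorial (m + 2) : ℚ)) := by
  obtain ⟨p, rfl⟩ : ∃ p, n = p + 2 := ⟨n - 2, by omega⟩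
  have hle : p + 1 ≤ m + 1 := by omega
  have hB := lemB m (p + 1) hle
  have hred : p + 2 - 1 = p + 1 := rfl
  rw [hred]
  rw [hB]
  -- now relate choose to the product
  have hdesc : (m.descFactorial (p + 1) : ℚ) = ∏ j ∈ Finset.range (p + 1), ((m - j : ℕ) : ℚ) := by
    rw [Nat.descFactorial_eq_prod_range]
    push_cast
    rfl
  have hchoose : (∏ j ∈ Finset.range (p + 1), ((m - j : ℕ) : ℚ)) =
      ((p + 1).factorial : ℚ) * (m.choose (p + 1) : ℚ) := by
    rw [← hdesc, Nat.descFactorial_eq_factorial_mul_choose]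
    push_cast
    ring
  rw [hchoose]
  have h1 : ((p + 1).factorial : ℚ) ≠ 0 := by positivity
  have h2 : ((m + 2).factorial : ℚ) ≠ 0 := by positivity
  field_simp
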